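/- Every finite tree T with q ≥ 1 edges admits an odd-edge graceful-difference total coloring: there exist a constant k ≥ 0 and an assignment f of natural numbers to the vertices and edges of T such that the set of edge colors {f(e) : e ∈ E(T)} equals the odd set {1,3,…,2q−1} and ||f(u) − f(v)| − f(uv)| = k for every edge uv of T. -/

import Mathlib

open SimpleGraph

private lemma myIsPath.concat {V : Type*} {G : SimpleGraph V} {r u v : V}
    {p : G.Walk r u} (hp : p.IsPath) (h : G.Adj u v) (hv : v ∉ p.support) :
    (p.concat h).IsPath := by
  rw [← SimpleGraph.Walk.isPath_reverse_iff, SimpleGraph.Walk.reverse_concat]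
  exact hp.reverse.cons (by simpa [SimpleGraph.Walk.support_reverse] using hv)

/-- Every finite tree `T` with `q ≥ 1` edges admits an odd-edge
graceful-difference total coloring: there are a constant `k` and colors on vertices and
edges such that the edge-color set is exactly `{1, 3, …, 2q - 1}` and
`||f(u) - f(v)| - f(uv)| = k` for every edge `uv`. -/
theorem tree_admits_odd_edge_graceful_difference_total_coloring
    {V : Type*} [Fintype V] [DecidableEq V]
    (T : SimpleGraph V) [DecidableRel T.Adj]
    (hT : T.IsTree)
    (q : ℕ) (hq : q = T.edgeFinset.card) (hq1 : 1 ≤ q) :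
    ∃ (fV : V → ℕ) (fE : Sym2 V → ℕ) (k : ℕ),
      fE '' T.edgeSet = {n : ℕ | Odd n ∧ n < 2 * q} ∧
      ∀ u v, T.Adj u v → Nat.dist (Nat.dist (fV u) (fV v)) (fE s(u, v)) = k := by
  classical
  obtain ⟨r⟩ : Nonempty V := hT.isConnected.nonempty
  -- edge labeling: a bijection from the edges to {1, 3, ..., 2q-1}
  have hcard : Fintype.card T.edgeFinset = q := by rw [Fintype.card_coe]; convert hq.symm
  let eqv : T.edgeFinset ≃ Fin q := Fintype.equivFinOfCardEq hcard
  let fE : Sym2 V → ℕ := fun s =>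
    if h : s ∈ T.edgeFinset then 2 * (eqv ⟨s, h⟩ : ℕ) + 1 else 0
  -- the unique path from the root r
  have hu := hT.existsUnique_path
  choose P hP hPu using hu
  let fV : V → ℕ := fun v => ((P r v).edges.map fE).sum
  -- key step: if v is not on the path to u, the path to v extends the path to u
  have step : ∀ u v (h : T.Adj u v), v ∉ (P r u).support →
      fV v = fV u + fE s(u, v) := by
    intro u v h hv
    have hpath : ((P r u).concat h).IsPath := myIsPath.concat (hP r u) h hv
    have := hPu r v _ hpath
    simp only [fV, ← this, SimpleGraph.Walk.edges_concat, List.map_concat, List.sum_concat]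
  -- if v is on the path to u (and u ≠ v), then u is not on the path to v
  have opp : ∀ u v, u ≠ v → ∀ hv : v ∈ (P r u).support, u ∉ (P r v).support := by
    intro u v huv hv hu'
    have htake : ((P r u).takeUntil v hv).IsPath := (hP r u).takeUntil hv
    have hPv : (P r u).takeUntil v hv = P r v := hPu r v _ htake
    rw [← hPv] at hu'
    have hspec := (P r u).take_spec hv
    have hnodup : (P r u).support.Nodup := (hP r u).support_nodup
    rw [← hspec, SimpleGraph.Walk.support_append] at hnodup
    have hdisj := List.disjoint_of_nodup_append hnodup
    have hu2 : u ∈ ((P r u).dropUntil v hv).support.tail := by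
      have hmem : u ∈ ((P r u).dropUntil v hv).support :=
        SimpleGraph.Walk.end_mem_support _
      rw [SimpleGraph.Walk.support_eq_cons, List.mem_cons] at hmem
      rcases hmem with hmem | hmem
      · exact absurd hmem huv
      · exact hmem
    exact hdisj hu' hu2
  have key : ∀ u v, T.Adj u v → Nat.dist (fV u) (fV v) = fE s(u, v) := by
    intro u v h
    by_cases hv : v ∈ (P r u).support
    · have hu' : u ∉ (P r v).support := opp u v h.ne hv
      have := step v u h.symm hu'
      rw [Sym2.eq_swap] at this
      rw [this]
      simp [Nat.dist]
    · have := step u v h hv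
      rw [this]
      simp [Nat.dist]
  refine ⟨fV, fE, 0, ?_, fun u v h => by rw [key u v h]; simp [Nat.dist]⟩
  ext n
  simp only [Set.mem_image, Set.mem_setOf_eq]
  constructor
  · rintro ⟨s, hs, rfl⟩
    have hs' : s ∈ T.edgeFinset := by rwa [SimpleGraph.mem_edgeFinset]
    simp only [fE, dif_pos hs']
    exact ⟨⟨_, rfl⟩, by have := (eqv ⟨s, hs'⟩).2; omega⟩
  · rintro ⟨⟨i, rfl⟩, hlt⟩
    have hi : i < q := by omega
    set t := eqv.symm ⟨i, hi⟩ with ht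
    refine ⟨t.1, by have := t.2; rwa [← SimpleGraph.mem_edgeFinset], ?_⟩
    simp only [fE, dif_pos t.2]
    have : eqv ⟨t.1, t.2⟩ = ⟨i, hi⟩ := by
      rw [Subtype.coe_eta, ht, Equiv.apply_symm_apply]
    rw [this]
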